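/- If g : ℝ² → ℝ is linear, g(x) = ω·x for a fixed nonzero vector ω ∈ ℝ², and f is a polynomial of degree ≤ k, then there exists a polynomial vector field p of degree ≤ k with div p + i ω·p = f. -/

import Mathlib

open MvPolynomial

lemma totalDegree_pderiv_le' {f : MvPolynomial (Fin 2) ℂ} {i : Fin 2} {n : ℕ}
    (h : f.totalDegree ≤ n + 1) : (pderiv i f).totalDegree ≤ n := by
  classical
  have hrw : pderiv i f = ∑ d ∈ f.support, pderiv i (monomial d (coeff d f)) := by
    rw [← map_sum]
    congr 1
    exact f.as_sum
  rw [hrw]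
  refine (totalDegree_finset_sum _ _).trans (Finset.sup_le fun d hd => ?_)
  rw [pderiv_monomial]
  by_cases hdi : d i = 0
  · simp [hdi]
  · refine (totalDegree_monomial_le _ _).trans ?_
    have hds : d.sum (fun _ e => e) ≤ n + 1 :=
      le_trans (le_totalDegree hd) h
    have hadd : (d - Finsupp.single i 1) + Finsupp.single i 1 = d := by
      ext j
      simp only [Finsupp.add_apply, Finsupp.tsub_apply, Finsupp.single_apply]
      by_cases hji : j = i
      · subst hji; simp; omega
      · simp [Ne.symm hji]
    have hsum : (d - Finsupp.single i 1).sum (fun _ e => e) + 1 = d.sum (fun _ e => e) := by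
      conv_rhs => rw [← hadd]
      rw [Finsupp.sum_add_index' (fun _ => rfl) (fun _ _ _ => rfl)]
      rw [Finsupp.sum_single_index rfl]
    simp only [Function.id_def] at *
    omega

lemma pderiv_eq_zero_of_totalDegree_zero {f : MvPolynomial (Fin 2) ℂ}
    (h : f.totalDegree = 0) (i : Fin 2) : pderiv i f = 0 := by
  classical
  have hm := (totalDegree_eq_zero_iff _ f).mp h
  calc pderiv i f = ∑ d ∈ f.support, pderiv i (monomial d (coeff d f)) := by
        rw [← map_sum]; congr 1; exact f.as_sum
    _ = 0 := Finset.sum_eq_zero fun d hd => by rw [pderiv_monomial, hm d hd i]; simp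

/-- Key lemma: for any constants `c₁ c₂`, the operator `q ↦ q + c₁ ∂₀ q + c₂ ∂₁ q`
is surjective on polynomials of degree ≤ n. -/
lemma levin_aux (c₁ c₂ : ℂ) (n : ℕ) :
    ∀ f : MvPolynomial (Fin 2) ℂ, f.totalDegree ≤ n →
      ∃ q : MvPolynomial (Fin 2) ℂ, q.totalDegree ≤ n ∧
        q + C c₁ * pderiv 0 q + C c₂ * pderiv 1 q = f := by
  induction n with
  | zero =>
    intro f hf
    refine ⟨f, hf, ?_⟩
    have h0 : f.totalDegree = 0 := Nat.le_zero.mp hf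
    rw [pderiv_eq_zero_of_totalDegree_zero h0 0, pderiv_eq_zero_of_totalDegree_zero h0 1]
    ring
  | succ n ih =>
    intro f hf
    set Df : MvPolynomial (Fin 2) ℂ := C c₁ * pderiv 0 f + C c₂ * pderiv 1 f with hDf
    have hDfdeg : Df.totalDegree ≤ n := by
      refine (totalDegree_add _ _).trans (max_le ?_ ?_)
      · exact (totalDegree_mul _ _).trans (by
          simpa using totalDegree_pderiv_le' (i := 0) hf)
      · exact (totalDegree_mul _ _).trans (by
          simpa using totalDegree_pderiv_le' (i := 1) hf)
    obtain ⟨q', hq'deg, hq'⟩ := ih Df hDfdeg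
    refine ⟨f - q', ?_, ?_⟩
    · exact (totalDegree_sub _ _).trans (max_le hf (hq'deg.trans (Nat.le_succ n)))
    · rw [map_sub, map_sub]
      rw [hDf] at hq'
      linear_combination -hq'

/-- For a linear phase `g(x) = ω·x` with `ω ∈ ℝ²` nonzero, and any polynomial
`f` of degree ≤ k, there exists a polynomial vector field `p = (p₁, p₂)` of degree ≤ k with
`div p + i ω·p = f`. -/
theorem levin_pde_polynomial_solvability
    (ω : Fin 2 → ℝ) (hω : ω ≠ 0) (k : ℕ)
    (f : MvPolynomial (Fin 2) ℂ) (hf : f.totalDegree ≤ k) :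
    ∃ p₁ p₂ : MvPolynomial (Fin 2) ℂ,
      p₁.totalDegree ≤ k ∧ p₂.totalDegree ≤ k ∧
      pderiv 0 p₁ + pderiv 1 p₂ +
        C (Complex.I * (ω 0 : ℂ)) * p₁ + C (Complex.I * (ω 1 : ℂ)) * p₂ = f := by
  have hS : ((ω 0 : ℂ)^2 + (ω 1 : ℂ)^2) ≠ 0 := by
    have : (ω 0)^2 + (ω 1)^2 ≠ 0 := by
      intro h
      apply hω
      have h0 : ω 0 = 0 := by nlinarith [sq_nonneg (ω 0), sq_nonneg (ω 1)]
      have h1 : ω 1 = 0 := by nlinarith [sq_nonneg (ω 0), sq_nonneg (ω 1)]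
      funext j
      fin_cases j <;> assumption
    intro h
    apply this
    have h' : (((ω 0)^2 + (ω 1)^2 : ℝ) : ℂ) = 0 := by push_cast; exact h
    exact_mod_cast h'
  set c₁ : ℂ := -Complex.I * (ω 0 : ℂ) / ((ω 0 : ℂ)^2 + (ω 1 : ℂ)^2) with hc₁
  set c₂ : ℂ := -Complex.I * (ω 1 : ℂ) / ((ω 0 : ℂ)^2 + (ω 1 : ℂ)^2) with hc₂
  obtain ⟨q, hqdeg, hq⟩ := levin_aux c₁ c₂ k f hf
  refine ⟨C c₁ * q, C c₂ * q, ?_, ?_, ?_⟩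
  · exact (totalDegree_mul _ _).trans (by simpa using hqdeg)
  · exact (totalDegree_mul _ _).trans (by simpa using hqdeg)
  · rw [pderiv_C_mul, pderiv_C_mul]
    have hc : C (Complex.I * (ω 0 : ℂ)) * C c₁ + C (Complex.I * (ω 1 : ℂ)) * C c₂
        = (1 : MvPolynomial (Fin 2) ℂ) := by
      rw [← C_mul, ← C_mul, ← C_add, ← C_1]
      congr 1
      rw [hc₁, hc₂]
      field_simp
      linear_combination (-((ω 0:ℂ)^2 + (ω 1:ℂ)^2)) * Complex.I_sq
    linear_combination hq + q * hc
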